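/- Let r ≤ n and let S : M_r(ℂ) → M_n(ℂ) be the corner embedding sending a ∈ M_r(ℂ) to the n×n matrix having a as its top-left r×r block and zeros elsewhere. If φ : M_m(ℂ) → M_r(ℂ) is an exposed positive linear map, then S ∘ φ : M_m(ℂ) → M_n(ℂ) is an exposed positive linear map. -/

import Mathlib

open Matrix ComplexOrder

noncomputable section

/-- A linear map between matrix algebras is positive if it sends positive
semidefinite matrices to positive semidefinite matrices. -/
def IsPosMap {m n : ℕ} (φ : Matrix (Fin m) (Fin m) ℂ →ₗ[ℂ] Matrix (Fin n) (Fin n) ℂ) : Prop :=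
  ∀ a : Matrix (Fin m) (Fin m) ℂ, a.PosSemidef → (φ a).PosSemidef

/-- A positive linear map `φ` is exposed (generates an exposed ray of the cone of
positive maps) if every positive map `ψ` such that `⟨η, φ(a) η⟩ = 0` implies
`⟨η, ψ(a) η⟩ = 0` (for `a` positive semidefinite) is a nonnegative multiple of `φ`. -/
def IsExposedMap {m n : ℕ} (φ : Matrix (Fin m) (Fin m) ℂ →ₗ[ℂ] Matrix (Fin n) (Fin n) ℂ) :
    Prop :=
  IsPosMap φ ∧
    ∀ ψ : Matrix (Fin m) (Fin m) ℂ →ₗ[ℂ] Matrix (Fin n) (Fin n) ℂ, IsPosMap ψ →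
      (∀ a : Matrix (Fin m) (Fin m) ℂ, a.PosSemidef → ∀ η : Fin n → ℂ,
        star η ⬝ᵥ (φ a) *ᵥ η = 0 → star η ⬝ᵥ (ψ a) *ᵥ η = 0) →
      ∃ c : ℝ, 0 ≤ c ∧ ψ = (c : ℂ) • φ

/-- The map `Ad_s : x ↦ s* x s`. -/
def adMap {m n : ℕ} (s : Matrix (Fin m) (Fin n) ℂ) :
    Matrix (Fin m) (Fin m) ℂ →ₗ[ℂ] Matrix (Fin n) (Fin n) ℂ where
  toFun x := sᴴ * x * s
  map_add' x y := by simp [Matrix.add_mul, Matrix.mul_add]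
  map_smul' c x := by simp [Matrix.smul_mul, Matrix.mul_smul]

/-- The transpose map on matrices, as a linear map. -/
def transposeLM (m : ℕ) : Matrix (Fin m) (Fin m) ℂ →ₗ[ℂ] Matrix (Fin m) (Fin m) ℂ where
  toFun x := xᵀ
  map_add' x y := Matrix.transpose_add x y
  map_smul' c x := by simp

/-- The corner embedding `S : M_r(ℂ) → M_n(ℂ)` placing `a` as the top-left `r × r`
block and zeros elsewhere. -/
def cornerEmbed {r n : ℕ} (h : r ≤ n) :
    Matrix (Fin r) (Fin r) ℂ →ₗ[ℂ] Matrix (Fin n) (Fin n) ℂ where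
  toFun a := Matrix.of fun i j =>
    if hi : (i : ℕ) < r then if hj : (j : ℕ) < r then a ⟨i, hi⟩ ⟨j, hj⟩ else 0 else 0
  map_add' x y := by
    ext i j
    by_cases hi : (i : ℕ) < r <;> by_cases hj : (j : ℕ) < r <;> simp [hi, hj]
  map_smul' c x := by
    ext i j
    by_cases hi : (i : ℕ) < r <;> by_cases hj : (j : ℕ) < r <;> simp [hi, hj]



section Aux

variable {m r n : ℕ}

variable {m r n : ℕ}

lemma sum_fin_lt (h : r ≤ n) (f : Fin n → ℂ)
    (hf : ∀ i : Fin n, ¬ (i : ℕ) < r → f i = 0) :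
    ∑ i, f i = ∑ j : Fin r, f (Fin.castLE h j) := by
  have : ∑ j : Fin r, f (Fin.castLE h j) = ∑ i ∈ Finset.univ.map (Fin.castLEEmb h), f i :=
    (Finset.sum_map Finset.univ (Fin.castLEEmb h) f).symm
  rw [this]
  refine (Finset.sum_subset (Finset.subset_univ _) ?_).symm
  intro i _ hi
  refine hf i fun hlt => hi ?_
  simp only [Finset.mem_map, Finset.mem_univ, true_and]
  exact ⟨⟨(i : ℕ), hlt⟩, Fin.ext rfl⟩

lemma psd_entry_zero {M : Matrix (Fin n) (Fin n) ℂ} (hM : M.PosSemidef)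
    {t : Fin n} (ht : M t t = 0) (s : Fin n) : M t s = 0 ∧ M s t = 0 := by
  obtain ⟨B, rfl⟩ : ∃ B : Matrix (Fin n) (Fin n) ℂ, M = Bᴴ * B := by
    open MatrixOrder in
    exact (CFC.exists_sqrt_of_isSelfAdjoint_of_quasispectrumRestricts hM.isHermitian
      (QuasispectrumRestricts.nnreal_of_nonneg hM.nonneg)).elim fun X hX =>
        ⟨X, by rw [← hX.2.2, ← star_eq_conjTranspose, hX.1.star_eq]⟩
  have hcol : ∀ k, B k t = 0 := by
    have h0 : ∑ k, star (B k t) * B k t = 0 := by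
      simpa [Matrix.mul_apply, Matrix.conjTranspose_apply] using ht
    have hnn : ∀ k ∈ Finset.univ, (0:ℂ) ≤ star (B k t) * B k t :=
      fun k _ => star_mul_self_nonneg _
    intro k
    have := (Finset.sum_eq_zero_iff_of_nonneg hnn).mp h0 k (Finset.mem_univ k)
    rw [Complex.star_def, ← Complex.normSq_eq_conj_mul_self] at this
    exact Complex.normSq_eq_zero.mp (by exact_mod_cast this)
  constructor
  · simp [Matrix.mul_apply, Matrix.conjTranspose_apply, hcol]
  · simp [Matrix.mul_apply, Matrix.conjTranspose_apply, hcol]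

lemma psd_vecMulVec (v : Fin n → ℂ) : (vecMulVec v (star v)).PosSemidef := by
  refine Matrix.PosSemidef.of_dotProduct_mulVec_nonneg ?_ ?_
  · ext i j
    simp [Matrix.conjTranspose_apply, vecMulVec_apply, mul_comm]
  · intro x
    have : (vecMulVec v (star v)) *ᵥ x = (star v ⬝ᵥ x) • v := by
      ext i
      simp [mulVec, vecMulVec_apply, dotProduct, Finset.mul_sum, mul_comm, mul_left_comm]
    rw [this]
    rw [dotProduct_smul]
    have hsd : star x ⬝ᵥ v = star (star v ⬝ᵥ x) := by
      simp [dotProduct, mul_comm]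
    rw [smul_eq_mul, mul_comm, hsd]
    exact star_mul_self_nonneg _


@[simp] lemma cornerEmbed_apply' (h : r ≤ n) (a : Matrix (Fin r) (Fin r) ℂ) (i j : Fin n) :
    cornerEmbed h a i j =
      if hi : (i : ℕ) < r then if hj : (j : ℕ) < r then a ⟨i, hi⟩ ⟨j, hj⟩ else 0 else 0 := rfl

lemma cornerEmbed_quadform (h : r ≤ n) (a : Matrix (Fin r) (Fin r) ℂ) (η : Fin n → ℂ) :
    star η ⬝ᵥ (cornerEmbed h a) *ᵥ η =
      star (η ∘ Fin.castLE h) ⬝ᵥ a *ᵥ (η ∘ Fin.castLE h) := by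
  have lhs : star η ⬝ᵥ (cornerEmbed h a) *ᵥ η
      = ∑ i, star (η i) * ∑ j, cornerEmbed h a i j * η j := rfl
  have rhs : star (η ∘ Fin.castLE h) ⬝ᵥ a *ᵥ (η ∘ Fin.castLE h)
      = ∑ i, star (η (Fin.castLE h i)) * ∑ j, a i j * η (Fin.castLE h j) := rfl
  rw [lhs, rhs]
  have step1 : ∀ i : Fin n, ¬ (i : ℕ) < r →
      star η i * ∑ j, cornerEmbed h a i j * η j = 0 := by
    intro i hi
    simp [hi]
  rw [sum_fin_lt h (fun i => star (η i) * ∑ j, cornerEmbed h a i j * η j) step1]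
  refine Finset.sum_congr rfl fun i _ => ?_
  have step2 : ∀ j : Fin n, ¬ (j : ℕ) < r →
      cornerEmbed h a (Fin.castLE h i) j * η j = 0 := by
    intro j hj
    simp [hj]
  rw [sum_fin_lt h (fun j => cornerEmbed h a (Fin.castLE h i) j * η j) step2]
  congr 1
  refine Finset.sum_congr rfl fun j _ => ?_
  congr 1
  simp [Fin.castLE, Fin.is_lt]

lemma cornerEmbed_posSemidef (h : r ≤ n) {a : Matrix (Fin r) (Fin r) ℂ}
    (ha : a.PosSemidef) : (cornerEmbed h a).PosSemidef := by
  refine Matrix.PosSemidef.of_dotProduct_mulVec_nonneg ?_ ?_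
  · ext i j
    simp only [conjTranspose_apply, cornerEmbed_apply']
    by_cases hi : (i : ℕ) < r
    · by_cases hj : (j : ℕ) < r
      · simpa [hi, hj] using ha.1.apply ⟨(i : ℕ), hi⟩ ⟨(j : ℕ), hj⟩
      · simp [hi, hj]
    · simp [hi]
  · intro x
    rw [cornerEmbed_quadform]
    exact ha.dotProduct_mulVec_nonneg _

lemma single_quadform (M : Matrix (Fin n) (Fin n) ℂ) (t : Fin n) :
    star (Pi.single t (1:ℂ)) ⬝ᵥ M *ᵥ Pi.single t 1 = M t t := by
  simp [dotProduct, mulVec, Pi.single_apply, Finset.mul_sum, mul_comm, Finset.sum_ite_eq]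

/-- Extension of a vector on `Fin r` to `Fin n` by zero. -/
def extend0 (h : r ≤ n) (ξ : Fin r → ℂ) : Fin n → ℂ :=
  fun i => if hi : (i : ℕ) < r then ξ ⟨i, hi⟩ else 0

lemma extend0_comp (h : r ≤ n) (ξ : Fin r → ℂ) :
    extend0 h ξ ∘ Fin.castLE h = ξ := by
  funext j
  simp [extend0, Fin.castLE, Fin.is_lt]

lemma span_psd (a : Matrix (Fin m) (Fin m) ℂ) :
    a ∈ Submodule.span ℂ {x : Matrix (Fin m) (Fin m) ℂ | x.PosSemidef} := by
  set S := Submodule.span ℂ {x : Matrix (Fin m) (Fin m) ℂ | x.PosSemidef}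
  have hP : ∀ v : Fin m → ℂ, vecMulVec v (star v) ∈ S :=
    fun v => Submodule.subset_span (psd_vecMulVec v)
  have hstd : ∀ k l : Fin m, Matrix.single k l (1:ℂ) ∈ S := by
    intro k l
    set x : Fin m → ℂ := Pi.single k 1
    set y : Fin m → ℂ := Pi.single l 1
    have polar_id : ∀ a b c d : ℂ,
        (1/4:ℂ)*((a+b)*(c+d)) + (Complex.I/4)*((a+Complex.I*b)*(c - Complex.I*d))
          + (-(1/4):ℂ)*((a-b)*(c-d)) + (-(Complex.I/4))*((a-Complex.I*b)*(c+Complex.I*d))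
          = a*d := by
      intro a b c d
      linear_combination ((b*c - a*d)/2) * Complex.I_sq
    have key : Matrix.single k l (1:ℂ) =
        (1/4 : ℂ) • vecMulVec (x + y) (star (x + y))
        + (Complex.I/4) • vecMulVec (x + Complex.I • y) (star (x + Complex.I • y))
        + (-(1/4) : ℂ) • vecMulVec (x - y) (star (x - y))
        + (-(Complex.I/4)) • vecMulVec (x - Complex.I • y) (star (x - Complex.I • y)) := by
      have hxy : Matrix.single k l (1:ℂ) = vecMulVec x (star y) := by
        ext i j
        simp only [Matrix.single, Matrix.of_apply, vecMulVec_apply, Pi.star_apply,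
          Pi.single_apply, x, y]
        by_cases hik : i = k
        · by_cases hjl : j = l
          · simp [hik, hjl]
          · simp [hik, hjl, Ne.symm hjl]
        · by_cases hjl : j = l
          · simp [hik, hjl, Ne.symm hik]
          · simp [hik, hjl, Ne.symm hik, Ne.symm hjl]
      rw [hxy]
      ext i j
      simp only [vecMulVec_apply, Matrix.add_apply, Matrix.smul_apply, Pi.add_apply,
        Pi.sub_apply, Pi.smul_apply, Pi.star_apply, star_add, star_sub, star_smul,
        Complex.star_def, Complex.conj_I, smul_eq_mul]
      rw [← polar_id (x i) (y i) ((starRingEnd ℂ) (x j)) ((starRingEnd ℂ) (y j))]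
      ring
    rw [key]
    exact S.add_mem (S.add_mem (S.add_mem (S.smul_mem _ (hP _)) (S.smul_mem _ (hP _)))
      (S.smul_mem _ (hP _))) (S.smul_mem _ (hP _))
  have := Matrix.matrix_eq_sum_single a
  rw [this]
  refine Submodule.sum_mem _ fun k _ => Submodule.sum_mem _ fun l _ => ?_
  rw [show Matrix.single k l (a k l) = a k l • Matrix.single k l (1:ℂ) by
    rw [smul_single, smul_eq_mul, mul_one]]
  exact S.smul_mem _ (hstd k l)

/-- Restriction to the top-left corner, as a linear map. -/
def cornerRestrict (h : r ≤ n) :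
    Matrix (Fin n) (Fin n) ℂ →ₗ[ℂ] Matrix (Fin r) (Fin r) ℂ where
  toFun M := Matrix.of fun i j => M (Fin.castLE h i) (Fin.castLE h j)
  map_add' x y := by ext i j; simp
  map_smul' c x := by ext i j; simp

end Aux

/-- If `φ : M_m(ℂ) → M_r(ℂ)` is an exposed positive map and `r ≤ n`, then the
composition of `φ` with the corner embedding `S : M_r(ℂ) → M_n(ℂ)` is exposed. -/
theorem cornerEmbed_comp_isExposed {m r n : ℕ} (h : r ≤ n)
    (φ : Matrix (Fin m) (Fin m) ℂ →ₗ[ℂ] Matrix (Fin r) (Fin r) ℂ)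
    (hφ : IsExposedMap φ) :
    IsExposedMap ((cornerEmbed h).comp φ) := by
  classical
  constructor
  · intro a ha
    exact cornerEmbed_posSemidef h (hφ.1 a ha)
  · intro ψ hψ hcond
    -- Step A: entries of `ψ a` outside the corner vanish, for `a` PSD.
    have hzero : ∀ a : Matrix (Fin m) (Fin m) ℂ, a.PosSemidef →
        ∀ i j : Fin n, ¬((i : ℕ) < r ∧ (j : ℕ) < r) → ψ a i j = 0 := by
      intro a ha i j hij
      have key : ∀ t : Fin n, ¬(t : ℕ) < r → ψ a t t = 0 := by
        intro t ht
        have hsingle : (Pi.single t (1:ℂ)) ∘ Fin.castLE h = 0 := by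
          funext j'
          exact Pi.single_eq_of_ne (fun hc => ht (by simp [← hc])) 1
        have h0 : star (Pi.single t (1:ℂ)) ⬝ᵥ
            (((cornerEmbed h).comp φ) a) *ᵥ Pi.single t 1 = 0 := by
          rw [LinearMap.comp_apply, cornerEmbed_quadform, hsingle]
          simp
        have h1 := hcond a ha _ h0
        rwa [single_quadform] at h1
      rcases not_and_or.mp hij with hi | hj
      · exact (psd_entry_zero (hψ a ha) (key i hi) j).1
      · exact (psd_entry_zero (hψ a ha) (key j hj) i).2
    -- Step B: extend to all matrices `a` by linearity and the span of PSD matrices.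
    have hzero' : ∀ (a : Matrix (Fin m) (Fin m) ℂ) (i j : Fin n),
        ¬((i : ℕ) < r ∧ (j : ℕ) < r) → ψ a i j = 0 := by
      intro a i j hij
      refine Submodule.span_induction (p := fun x _ => ψ x i j = 0)
        (fun x hx => hzero x hx i j hij) (by simp) ?_ ?_ (span_psd a)
      · intro x y _ _ hx hy
        simp [map_add, Matrix.add_apply, hx, hy]
      · intro c x _ hx
        simp [_root_.map_smul, Matrix.smul_apply, hx]
    -- Step C: `ψ` factors through the corner.
    set ψ' : Matrix (Fin m) (Fin m) ℂ →ₗ[ℂ] Matrix (Fin r) (Fin r) ℂ :=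
      (cornerRestrict h).comp ψ with hψ'def
    have hψeq : ψ = (cornerEmbed h).comp ψ' := by
      apply LinearMap.ext
      intro a
      ext i j
      rw [LinearMap.comp_apply]
      by_cases hi : (i : ℕ) < r
      · by_cases hj : (j : ℕ) < r
        · simp only [cornerEmbed_apply', hi, hj, dif_pos]
          show ψ a i j = (cornerRestrict h) (ψ a) ⟨(i:ℕ), hi⟩ ⟨(j:ℕ), hj⟩
          show ψ a i j = ψ a (Fin.castLE h ⟨(i:ℕ), hi⟩) (Fin.castLE h ⟨(j:ℕ), hj⟩)
          congr 1 <;> exact Fin.ext rfl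
        · rw [hzero' a i j (by tauto)]
          simp [hi, hj]
      · rw [hzero' a i j (by tauto)]
        simp [hi]
    have happ : ∀ a, ψ a = cornerEmbed h (ψ' a) := fun a => by
      conv_lhs => rw [hψeq]
      rfl
    -- Step D: `ψ'` is positive.
    have hψ'pos : IsPosMap ψ' := by
      intro a ha
      have hpsd := hψ a ha
      refine Matrix.PosSemidef.of_dotProduct_mulVec_nonneg ?_ ?_
      · ext i j
        show star (ψ' a j i) = ψ' a i j
        show star (ψ a (Fin.castLE h j) (Fin.castLE h i)) =
          ψ a (Fin.castLE h i) (Fin.castLE h j)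
        exact hpsd.1.apply _ _
      · intro ξ
        have hre : extend0 h ξ ∘ Fin.castLE h = ξ := extend0_comp h ξ
        have := hpsd.dotProduct_mulVec_nonneg (extend0 h ξ)
        rwa [happ a, cornerEmbed_quadform, hre] at this
    -- Step E: `ψ'` satisfies the exposure condition relative to `φ`.
    have hψ'cond : ∀ a : Matrix (Fin m) (Fin m) ℂ, a.PosSemidef →
        ∀ ξ : Fin r → ℂ, star ξ ⬝ᵥ (φ a) *ᵥ ξ = 0 → star ξ ⬝ᵥ (ψ' a) *ᵥ ξ = 0 := by
      intro a ha ξ hq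
      have hre : extend0 h ξ ∘ Fin.castLE h = ξ := extend0_comp h ξ
      have h0 : star (extend0 h ξ) ⬝ᵥ (((cornerEmbed h).comp φ) a) *ᵥ extend0 h ξ = 0 := by
        rw [LinearMap.comp_apply, cornerEmbed_quadform, hre, hq]
      have h1 := hcond a ha _ h0
      rw [happ a, cornerEmbed_quadform, hre] at h1
      exact h1
    obtain ⟨c, hc0, hc⟩ := hφ.2 ψ' hψ'pos hψ'cond
    refine ⟨c, hc0, ?_⟩
    rw [hψeq, hc, LinearMap.comp_smul]


end
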